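/- Let q ≥ 3 be a prime power, n > q a prime number, and m = ord_n(q) ≥ 2. Let s be an integer such that the q-ary cyclotomic coset C_[s] modulo n contains both s and s + 1, with C_[s] ≠ C_[s+2], and suppose that the set Z = C_[s] ∪ C_[s+2] satisfies Z ∩ Z^{−1} = ∅, where Z^{−1} = { −z mod n : z ∈ Z }. Then there exist F_q-linear codes C ⊆ C′ ⊆ F_q^n such that the Euclidean dual satisfies C^⊥ ⊆ C, dim C = n − 2m, every nonzero codeword of C has Hamming weight at least 4, dim C′ = n − m, and every nonzero codeword of C′ has Hamming weight at least 3. (Via Steane's enlargement construction this yields an [[n, n − 3m, d ≥ 4]]_q quantum code.) -/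

import Mathlib

open Polynomial Finset

namespace Stmt10Aux

/-- Elements of a field extension of a finite field `F` (with `q` elements) fixed by
`x ↦ x ^ q` lie in the image of `F`. -/
lemma fixed_mem_range {F E : Type*} [Field F] [Fintype F] [Field E] [Algebra F E]
    {q : ℕ} (hF : Fintype.card F = q) {c : E} (h : c ^ q = c) :
    c ∈ Set.range (algebraMap F E) := by
  classical
  have hq1 : 1 < q := hF ▸ Fintype.one_lt_card
  set P : E[X] := X ^ q - X with hP
  have hPne : P ≠ 0 := by
    intro h0
    have : P.coeff q = 1 := by
      rw [hP]
      simp only [Polynomial.coeff_sub, Polynomial.coeff_X_pow, Polynomial.coeff_X,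
        if_pos rfl]
      rw [if_neg (by omega : ¬(1 : ℕ) = q)]
      simp
    rw [h0] at this
    simp at this
  have hdeg : P.natDegree ≤ q := by
    have h1 : (X ^ q - X : E[X]).natDegree ≤ q :=
      le_trans (Polynomial.natDegree_sub_le _ _) (by simp; omega)
    simpa [hP] using h1
  have hroot : ∀ a : E, a ^ q = a → a ∈ P.roots.toFinset := by
    intro a ha
    simp only [Multiset.mem_toFinset, Polynomial.mem_roots hPne, Polynomial.IsRoot.def, hP]
    simp [ha]
    exact hPne
  set T : Finset E := Finset.univ.image (algebraMap F E) with hT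
  have hTcard : T.card = q := by
    rw [hT, Finset.card_image_of_injective _ (algebraMap F E).injective, Finset.card_univ, hF]
  have hsub : T ⊆ P.roots.toFinset := by
    intro x hx
    rw [hT, Finset.mem_image] at hx
    obtain ⟨a, -, rfl⟩ := hx
    apply hroot
    rw [← map_pow, ← hF, FiniteField.pow_card]
  have hcard2 : P.roots.toFinset.card ≤ T.card := by
    rw [hTcard]
    exact le_trans (Multiset.toFinset_card_le _) (le_trans (Polynomial.card_roots' P) hdeg)
  have : T = P.roots.toFinset := Finset.eq_of_subset_of_card_le hsub hcard2
  have hc : c ∈ T := by rw [this]; exact hroot c h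
  rw [hT, Finset.mem_image] at hc
  obtain ⟨a, -, ha⟩ := hc
  exact ⟨a, ha⟩

/-- A product of distinct linear factors over roots divides a nonzero polynomial. -/
lemma prod_X_sub_C_dvd_of_roots {E : Type*} [Field E] {ι : Type*} {T : Finset ι} {c : ι → E}
    (hinj : Set.InjOn c T) {P : E[X]} (hP : P ≠ 0) (hroots : ∀ z ∈ T, P.eval (c z) = 0) :
    (∏ z ∈ T, (X - C (c z))) ∣ P := by
  have h1 : (T.val.map c).Nodup :=
    Multiset.Nodup.map_on (fun x hx y hy => hinj (by simpa using hx) (by simpa using hy)) T.nodup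
  have h2 : T.val.map c ≤ P.roots := by
    rw [Multiset.le_iff_subset h1]
    intro x hx
    obtain ⟨z, hz, rfl⟩ := Multiset.mem_map.mp hx
    rw [Polynomial.mem_roots hP]
    exact hroots z hz
  have h3 : ((T.val.map c).map fun a => X - C a).prod ∣ (P.roots.map fun a => X - C a).prod :=
    Multiset.prod_dvd_prod_of_le (Multiset.map_le_map h2)
  have h4 : (∏ z ∈ T, (X - C (c z))) = ((T.val.map c).map fun a => X - C a).prod := by
    rw [Multiset.map_map]
    rfl
  rw [h4]
  exact dvd_trans h3 (Polynomial.prod_multiset_X_sub_C_dvd P)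

/-- Vandermonde system with distinct nodes has only the zero solution. -/
lemma vandermonde_zero {E : Type*} [Field E] {k : ℕ} {β c : Fin k → E}
    (hβ : Function.Injective β) (hsys : ∀ r : Fin k, ∑ i, c i * β i ^ (r : ℕ) = 0) :
    c = 0 := by
  classical
  set M := Matrix.vandermonde β with hM
  have hdet : IsUnit M.det := by
    rw [hM, Matrix.det_vandermonde]
    apply IsUnit.mk0
    apply Finset.prod_ne_zero_iff.mpr
    intro i _
    apply Finset.prod_ne_zero_iff.mpr
    intro j hj
    have : i ≠ j := by
      intro h; subst h; simp at hj
    exact sub_ne_zero_of_ne (fun h => this (hβ h.symm))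
  have hvm : Matrix.vecMul c M = 0 := by
    funext r
    simpa [hM, Matrix.vecMul, Matrix.vandermonde, dotProduct] using hsys r
  calc c = Matrix.vecMul c 1 := by simp
    _ = Matrix.vecMul c (M * M⁻¹) := by rw [Matrix.mul_nonsing_inv _ hdet]
    _ = Matrix.vecMul (Matrix.vecMul c M) M⁻¹ := by rw [Matrix.vecMul_vecMul]
    _ = 0 := by rw [hvm]; simp

/-- A polynomial with few nonzero coefficients, all of index `< n`, vanishing at `k`
consecutive powers of an element of order `n`, is zero. -/
lemma small_support_eq_zero {E : Type*} [Field E] {n : ℕ} {α : E}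
    (hord : ∀ j : ℕ, α ^ j = 1 ↔ n ∣ j) (hn : 0 < n) {k s' : ℕ}
    {P : E[X]} (hdeg : ∀ i ∈ P.support, i < n) (hsupp : P.support.card ≤ k)
    (hroots : ∀ r < k, P.eval (α ^ (s' + r)) = 0) : P = 0 := by
  classical
  have hα0 : α ≠ 0 := by
    intro h
    have := (hord n).mpr dvd_rfl
    rw [h] at this
    simp [zero_pow hn.ne'] at this
  have hinj : ∀ a b : ℕ, a < n → b < n → α ^ a = α ^ b → a = b := by
    intro a b ha hb hab
    rcases le_total a b with hle | hle
    · have hx : α ^ a * α ^ (b - a) = α ^ a * 1 := by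
        rw [mul_one, ← pow_add, Nat.add_sub_cancel' hle, hab]
      have h2 : α ^ (b - a) = 1 := mul_left_cancel₀ (pow_ne_zero _ hα0) hx
      have := Nat.eq_zero_of_dvd_of_lt ((hord _).mp h2)
      rcases Nat.eq_or_lt_of_le (Nat.zero_le (b-a)) with hz | hz
      · omega
      · have := this (by omega); omega
    · have hx : α ^ b * α ^ (a - b) = α ^ b * 1 := by
        rw [mul_one, ← pow_add, Nat.add_sub_cancel' hle, ← hab]
      have h2 : α ^ (a - b) = 1 := mul_left_cancel₀ (pow_ne_zero _ hα0) hx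
      have := Nat.eq_zero_of_dvd_of_lt ((hord _).mp h2)
      rcases Nat.eq_or_lt_of_le (Nat.zero_le (a-b)) with hz | hz
      · omega
      · have := this (by omega); omega
  by_contra hPne
  set t := P.support.card with ht
  have htpos : 0 < t := Finset.card_pos.mpr (Polynomial.nonempty_support_iff.mpr hPne)
  set e : Fin t → {x // x ∈ P.support} := fun i => P.support.equivFin.symm i with he
  set β : Fin t → E := fun i => α ^ ((e i : ℕ)) with hβ
  set c : Fin t → E := fun i => P.coeff (e i) * α ^ (s' * (e i : ℕ)) with hc
  have hβinj : Function.Injective β := by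
    intro i j hij
    have h1 : ((e i : ℕ)) = ((e j : ℕ)) :=
      hinj _ _ (hdeg _ (e i).2) (hdeg _ (e j).2) hij
    have : e i = e j := Subtype.ext h1
    exact P.support.equivFin.symm.injective this
  have hsys : ∀ r : Fin t, ∑ i, c i * β i ^ (r : ℕ) = 0 := by
    intro r
    have hr : (r : ℕ) < k := lt_of_lt_of_le r.2 hsupp
    have heval := hroots r hr
    rw [Polynomial.eval_eq_sum, Polynomial.sum_def] at heval
    have hsum : ∑ i, c i * β i ^ (r : ℕ)
        = ∑ j ∈ P.support, P.coeff j * (α ^ (s' + (r : ℕ))) ^ j := by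
      rw [← Finset.sum_attach P.support (fun j => P.coeff j * (α ^ (s' + (r : ℕ))) ^ j)]
      apply Fintype.sum_equiv P.support.equivFin.symm
      intro i
      show P.coeff (e i) * α ^ (s' * (e i : ℕ)) * (α ^ ((e i : ℕ))) ^ (r : ℕ)
        = P.coeff ((P.support.equivFin.symm i : ℕ)) * (α ^ (s' + (r : ℕ))) ^ ((P.support.equivFin.symm i : ℕ))
      rw [mul_assoc, ← pow_mul, ← pow_add, ← pow_mul]
      congr 2
      ring
    rw [hsum]
    exact heval
  have hczero := vandermonde_zero hβinj hsys
  obtain ⟨j, hj⟩ : P.support.Nonempty := Polynomial.nonempty_support_iff.mpr hPne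
  have : c (P.support.equivFin ⟨j, hj⟩) = 0 := by rw [hczero]; rfl
  rw [hc] at this
  simp only [he, Equiv.symm_apply_apply] at this
  rcases mul_eq_zero.mp this with h | h
  · exact (Polynomial.mem_support_iff.mp hj) h
  · exact pow_ne_zero _ hα0 h

/-- Coefficient of a sum of monomials indexed by `Fin n`. -/
lemma coeff_sum_monomial {R : Type*} [Semiring R] {n : ℕ} (c : Fin n → R) (j : Fin n) :
    (∑ i : Fin n, monomial (i : ℕ) (c i)).coeff (j : ℕ) = c j := by
  classical
  rw [Polynomial.finset_sum_coeff]
  have key : ∀ i : Fin n, (monomial (i : ℕ) (c i)).coeff (j : ℕ) = if i = j then c i else 0 := by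
    intro i
    by_cases h : i = j
    · subst h; simp [Polynomial.coeff_monomial]
    · rw [Polynomial.coeff_monomial, if_neg (fun hh => h (Fin.ext hh)), if_neg h]
  rw [Finset.sum_congr rfl (fun i _ => key i)]
  simp

end Stmt10Aux

open Stmt10Aux

/-- The `q`-ary cyclotomic coset modulo `n` containing `a`, viewed in `ZMod n`. -/
def cyclotomicCoset (q n : ℕ) (a : ZMod n) : Set (ZMod n) :=
  {x | ∃ t : ℕ, x = a * (q : ZMod n) ^ t}

theorem stmt_10 (q n m s : ℕ) (F : Type) [Field F] [Fintype F] [DecidableEq F]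
    (hF : Fintype.card F = q)
    (hq : IsPrimePow q) (hq3 : 3 ≤ q) (hp : n.Prime) (hnq : q < n)
    (hm : m = orderOf ((q : ZMod n))) (hm2 : 2 ≤ m)
    (hcons : ((s : ZMod n) + 1) ∈ cyclotomicCoset q n (s : ZMod n))
    (hne : cyclotomicCoset q n (s : ZMod n) ≠ cyclotomicCoset q n ((s + 2 : ℕ) : ZMod n))
    (hZ : (cyclotomicCoset q n (s : ZMod n) ∪ cyclotomicCoset q n ((s + 2 : ℕ) : ZMod n)) ∩
        (Neg.neg '' (cyclotomicCoset q n (s : ZMod n) ∪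
          cyclotomicCoset q n ((s + 2 : ℕ) : ZMod n))) = ∅) :
    ∃ C C' : Submodule F (Fin n → F), C ≤ C' ∧
      (∀ y : Fin n → F, (∀ x ∈ C, ∑ i, x i * y i = 0) → y ∈ C) ∧
      Module.finrank F C = n - 2 * m ∧
      (∀ x ∈ C, x ≠ 0 → 4 ≤ hammingNorm x) ∧
      Module.finrank F C' = n - m ∧
      (∀ x ∈ C', x ≠ 0 → 3 ≤ hammingNorm x) := by
  classical
  have hn1 : 1 < n := hp.one_lt
  have hn0 : 0 < n := hp.pos
  haveI : Fact n.Prime := ⟨hp⟩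
  haveI : NeZero n := ⟨hn0.ne'⟩
  obtain ⟨m', hm'⟩ : ∃ m', m = m' + 1 := ⟨m - 1, by omega⟩
  have hq0 : (q : ZMod n) ≠ 0 := by
    rw [Ne, ZMod.natCast_eq_zero_iff]
    intro hd
    have := Nat.le_of_dvd (by omega) hd
    omega
  have hqm1 : (q : ZMod n) ^ m = 1 := by rw [hm]; exact pow_orderOf_eq_one _
  have hordq : orderOf ((q : ZMod n)) = m := hm.symm
  have hm0 : 0 < m := by omega
  set s' : ZMod n := (s : ZMod n) with hs'
  have hs2cast : ((s + 2 : ℕ) : ZMod n) = s' + 2 := by push_cast; ring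
  have hs0 : s' ≠ 0 := by
    obtain ⟨t, ht⟩ := hcons
    intro h
    rw [h, zero_mul] at ht
    simp at ht
  -- the defining set as a set
  set Zs : Set (ZMod n) := cyclotomicCoset q n s' ∪ cyclotomicCoset q n ((s + 2 : ℕ) : ZMod n)
    with hZs
  have hZsum : ∀ a ∈ Zs, ∀ b ∈ Zs, a + b ≠ 0 := by
    intro a ha b hb hab
    have hmem : a ∈ Zs ∩ (Neg.neg '' Zs) :=
      ⟨ha, ⟨b, hb, neg_eq_of_add_eq_zero_left hab⟩⟩
    rw [hZ] at hmem
    exact hmem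
  have hs20 : ((s + 2 : ℕ) : ZMod n) ≠ 0 := by
    intro h
    have h0 : (0 : ZMod n) ∈ Zs := Or.inr ⟨0, by rw [pow_zero, mul_one, h]⟩
    exact hZsum 0 h0 0 h0 (by ring)
  -- characteristic
  set p := ringChar F with hpdef
  haveI hcharF : CharP F p := ringChar.charP F
  obtain ⟨v, hpprime, hcardv⟩ := FiniteField.card F p
  have hqpv : q = p ^ (v : ℕ) := by rw [← hF, hcardv]
  have hpn : ¬ p ∣ n := by
    intro hd
    rcases (Nat.Prime.eq_one_or_self_of_dvd hp p hd) with h1 | h1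
    · exact hpprime.one_lt.ne' h1
    · have hpq : p ≤ q := by
        rw [hqpv]
        calc p = p ^ 1 := (pow_one p).symm
          _ ≤ p ^ (v : ℕ) := Nat.pow_le_pow_right hpprime.pos v.2
      omega
  haveI hnF : NeZero ((n : ℕ) : F) := ⟨by
    rw [Ne, CharP.cast_eq_zero_iff F p]
    exact hpn⟩
  -- the cyclotomic extension and primitive root
  obtain ⟨E, hfieldE, halgE, α, hord⟩ :
      ∃ (E : Type) (_ : Field E) (_ : Algebra F E) (α : E), ∀ j : ℕ, α ^ j = 1 ↔ n ∣ j := by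
    set n' : ℕ+ := ⟨n, hn0⟩ with hn'
    haveI : NeZero ((↑n' : ℕ) : F) := hnF
    obtain ⟨α, hα⟩ := IsCyclotomicExtension.exists_isPrimitiveRoot F
      (CyclotomicField n' F) (Set.mem_singleton (n' : ℕ)) n'.ne_zero
    exact ⟨CyclotomicField n' F, inferInstance, inferInstance, α,
      fun j => hα.pow_eq_one_iff_dvd j⟩
  have hα0 : α ≠ 0 := by
    intro h
    have h1 := (hord n).mpr dvd_rfl
    rw [h, zero_pow hn0.ne'] at h1
    exact zero_ne_one h1
  have hcast : ∀ a b : ℕ, (a : ZMod n) = (b : ZMod n) → α ^ a = α ^ b := by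
    intro a b hab
    have hmod : a % n = b % n := (ZMod.natCast_eq_natCast_iff a b n).mp hab
    have key : ∀ c : ℕ, α ^ c = α ^ (c % n) := by
      intro c
      conv_lhs => rw [← Nat.div_add_mod c n]
      rw [pow_add, pow_mul, (hord n).mpr dvd_rfl, one_pow, one_mul]
    rw [key a, key b, hmod]
  set ee : ZMod n → E := fun a => α ^ a.val with hee
  have heeval : ∀ a : ZMod n, ((a.val : ℕ) : ZMod n) = a := fun a => ZMod.natCast_rightInverse a
  have hee_pow : ∀ (a : ZMod n) (i : ℕ), ee a ^ i = ee (a * (i : ZMod n)) := by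
    intro a i
    show (α ^ a.val) ^ i = α ^ (a * (i : ZMod n)).val
    rw [← pow_mul]
    exact hcast _ _ (by rw [Nat.cast_mul, heeval, heeval])
  have hee_add : ∀ a b : ZMod n, ee (a + b) = ee a * ee b := by
    intro a b
    show α ^ (a + b).val = α ^ a.val * α ^ b.val
    rw [← pow_add]
    exact hcast _ _ (by rw [heeval, Nat.cast_add, heeval, heeval])
  have hpow_inj : ∀ a b : ℕ, a < n → b < n → α ^ a = α ^ b → a = b := by
    intro a b ha hb hab
    rcases le_total a b with hle | hle
    · have hx : α ^ a * α ^ (b - a) = α ^ a * 1 := by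
        rw [mul_one, ← pow_add, Nat.add_sub_cancel' hle, hab]
      have h2 : α ^ (b - a) = 1 := mul_left_cancel₀ (pow_ne_zero _ hα0) hx
      have h3 := (hord _).mp h2
      rcases Nat.eq_zero_or_pos (b - a) with h4 | h4
      · omega
      · have := Nat.le_of_dvd h4 h3; omega
    · have hx : α ^ b * α ^ (a - b) = α ^ b * 1 := by
        rw [mul_one, ← pow_add, Nat.add_sub_cancel' hle, ← hab]
      have h2 : α ^ (a - b) = 1 := mul_left_cancel₀ (pow_ne_zero _ hα0) hx
      have h3 := (hord _).mp h2
      rcases Nat.eq_zero_or_pos (a - b) with h4 | h4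
      · omega
      · have := Nat.le_of_dvd h4 h3; omega
  have hee_inj : Function.Injective ee := by
    intro a b hab
    have h1 : a.val = b.val := hpow_inj _ _ (ZMod.val_lt a) (ZMod.val_lt b) hab
    rw [← heeval a, ← heeval b, h1]
  have hee_ne_zero : ∀ a : ZMod n, ee a ≠ 0 := fun a => pow_ne_zero _ hα0
  have hee_pow_n : ∀ a : ZMod n, ee a ^ n = 1 := by
    intro a
    show (α ^ a.val) ^ n = 1
    rw [← pow_mul, mul_comm, pow_mul]
    rw [(hord n).mpr dvd_rfl, one_pow]
  -- finsets for the cyclotomic cosets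
  have hcoset_red : ∀ (a x : ZMod n), x ∈ cyclotomicCoset q n a →
      ∃ t, t < m ∧ x = a * (q : ZMod n) ^ t := by
    rintro a x ⟨t, ht⟩
    refine ⟨t % m, Nat.mod_lt _ hm0, ?_⟩
    rw [ht]
    congr 1
    conv_lhs => rw [← Nat.div_add_mod t m]
    rw [pow_add, pow_mul, hqm1, one_pow, one_mul]
  set ZF1 : Finset (ZMod n) := (Finset.range m).image (fun t => s' * (q : ZMod n) ^ t) with hZF1
  set ZF2 : Finset (ZMod n) :=
    (Finset.range m).image (fun t => ((s + 2 : ℕ) : ZMod n) * (q : ZMod n) ^ t) with hZF2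
  have hZF1coe : (ZF1 : Set (ZMod n)) = cyclotomicCoset q n s' := by
    ext x
    simp only [hZF1, Finset.coe_image, Finset.coe_range, Set.mem_image, Set.mem_Iio]
    constructor
    · rintro ⟨t, -, h⟩; exact ⟨t, h.symm⟩
    · rintro ht
      obtain ⟨t', ht', h'⟩ := hcoset_red _ _ ht
      exact ⟨t', ht', h'.symm⟩
  have hZF2coe : (ZF2 : Set (ZMod n)) = cyclotomicCoset q n ((s + 2 : ℕ) : ZMod n) := by
    ext x
    simp only [hZF2, Finset.coe_image, Finset.coe_range, Set.mem_image, Set.mem_Iio]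
    constructor
    · rintro ⟨t, -, h⟩; exact ⟨t, h.symm⟩
    · rintro ht
      obtain ⟨t', ht', h'⟩ := hcoset_red _ _ ht
      exact ⟨t', ht', h'.symm⟩
  have hcardgen : ∀ a : ZMod n, a ≠ 0 →
      ((Finset.range m).image (fun t => a * (q : ZMod n) ^ t)).card = m := by
    intro a ha
    rw [Finset.card_image_of_injOn, Finset.card_range]
    intro x hx y hy hxy
    have h1 : (q : ZMod n) ^ x = (q : ZMod n) ^ y := mul_left_cancel₀ ha hxy
    have hx' : x < orderOf ((q : ZMod n)) := by rw [hordq]; exact Finset.mem_coe.mp hx |> Finset.mem_range.mp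
    have hy' : y < orderOf ((q : ZMod n)) := by rw [hordq]; exact Finset.mem_coe.mp hy |> Finset.mem_range.mp
    exact pow_injOn_Iio_orderOf hx' hy' h1
  have hcard1 : ZF1.card = m := hcardgen s' hs0
  have hcard2 : ZF2.card = m := hcardgen _ hs20
  -- cosets are equal or disjoint
  have hcoset_eq_of_mem : ∀ a b x : ZMod n, x ∈ cyclotomicCoset q n a →
      x ∈ cyclotomicCoset q n b → cyclotomicCoset q n a = cyclotomicCoset q n b := by
    have hqmm : ∀ i : ℕ, (q : ZMod n) ^ i * (q : ZMod n) ^ (i * m') = 1 := by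
      intro i
      rw [← pow_add, show i + i * m' = m * i from by rw [hm']; ring, pow_mul, hqm1, one_pow]
    have key : ∀ a b x : ZMod n, x ∈ cyclotomicCoset q n a → x ∈ cyclotomicCoset q n b →
        cyclotomicCoset q n a ⊆ cyclotomicCoset q n b := by
      rintro a b x ⟨i, hi⟩ ⟨j, hj⟩ y ⟨t, hty⟩
      have hab : a = b * (q : ZMod n) ^ (j + i * m') := by
        have h2 : a * ((q : ZMod n) ^ i * (q : ZMod n) ^ (i * m'))
            = b * (q : ZMod n) ^ j * (q : ZMod n) ^ (i * m') := by
          rw [← mul_assoc, ← hi, hj]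
        rw [hqmm, mul_one] at h2
        rw [h2, mul_assoc, ← pow_add]
      exact ⟨j + i * m' + t, by rw [hty, hab, mul_assoc, ← pow_add]⟩
    intro a b x hxa hxb
    exact Set.Subset.antisymm (key a b x hxa hxb) (key b a x hxb hxa)
  have hdisj : Disjoint ZF1 ZF2 := by
    rw [Finset.disjoint_left]
    intro x hx1 hx2
    apply hne
    apply hcoset_eq_of_mem _ _ x
    · rw [← hZF1coe]; exact hx1
    · rw [← hZF2coe]; exact hx2
  set Z : Finset (ZMod n) := ZF1 ∪ ZF2 with hZdef
  have hcardZ : Z.card = 2 * m := by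
    rw [hZdef, Finset.card_union_of_disjoint hdisj, hcard1, hcard2]; ring
  have hZcoe : (Z : Set (ZMod n)) = Zs := by
    rw [hZdef, Finset.coe_union, hZF1coe, hZF2coe, hZs]
  have hZsumF : ∀ z ∈ Z, ∀ z' ∈ Z, z + z' ≠ 0 := by
    intro z hz z' hz'
    exact hZsum z (by rw [← hZcoe]; exact hz) z' (by rw [← hZcoe]; exact hz')
  have h2mn : 2 * m ≤ n := by
    have h1 := Finset.card_le_univ Z
    rw [hcardZ, ZMod.card] at h1
    exact h1
  -- stability under multiplication by q
  have hclosed : ∀ a : ZMod n, ∀ z ∈ cyclotomicCoset q n a,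
      (q : ZMod n) * z ∈ cyclotomicCoset q n a := by
    rintro a z ⟨t, rfl⟩
    exact ⟨t + 1, by ring⟩
  have hqZ1 : ∀ z ∈ ZF1, (q : ZMod n) * z ∈ ZF1 := by
    intro z hz
    have := hclosed s' z (by rw [← hZF1coe]; exact hz)
    rw [← hZF1coe] at this; exact this
  have hqZ2 : ∀ z ∈ ZF2, (q : ZMod n) * z ∈ ZF2 := by
    intro z hz
    have := hclosed _ z (by rw [← hZF2coe]; exact hz)
    rw [← hZF2coe] at this; exact this
  have himggen : ∀ T : Finset (ZMod n), (∀ z ∈ T, (q : ZMod n) * z ∈ T) →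
      Finset.image (fun z => (q : ZMod n) * z) T = T := by
    intro T hT
    apply Finset.eq_of_subset_of_card_le
    · intro x hx
      obtain ⟨z, hz, rfl⟩ := Finset.mem_image.mp hx
      exact hT z hz
    · rw [Finset.card_image_of_injective _ (mul_right_injective₀ hq0)]
  have himg1 := himggen ZF1 hqZ1
  have himg2 := himggen ZF2 hqZ2
  have himg : Finset.image (fun z => (q : ZMod n) * z) Z = Z := by
    apply himggen
    intro z hz
    rw [hZdef, Finset.mem_union] at hz ⊢
    rcases hz with h | h
    · exact Or.inl (hqZ1 z h)
    · exact Or.inr (hqZ2 z h)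
  -- generator polynomials over E
  set gE : E[X] := ∏ z ∈ Z, (X - C (ee z)) with hgE
  set g1E : E[X] := ∏ z ∈ ZF1, (X - C (ee z)) with hg1E
  set g2E : E[X] := ∏ z ∈ ZF2, (X - C (ee z)) with hg2E
  have hgE_split : gE = g1E * g2E := by
    rw [hgE, hg1E, hg2E, hZdef, Finset.prod_union hdisj]
  have hmonicT : ∀ T : Finset (ZMod n), (∏ z ∈ T, (X - C (ee z))).Monic :=
    fun T => monic_prod_of_monic _ _ (fun z _ => monic_X_sub_C _)
  have hdegT : ∀ T : Finset (ZMod n), (∏ z ∈ T, (X - C (ee z))).natDegree = T.card := by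
    intro T
    rw [Polynomial.natDegree_prod _ _ (fun z _ => X_sub_C_ne_zero _)]
    simp [Polynomial.natDegree_X_sub_C]
  haveI : CharP E p := charP_of_injective_algebraMap (algebraMap F E).injective p
  haveI : Fact p.Prime := ⟨hpprime⟩
  haveI : ExpChar E p := ExpChar.prime hpprime
  set phi : E →+* E := iterateFrobenius E p v with hphidef
  have hphi : ∀ x : E, phi x = x ^ q := fun x => by
    rw [hphidef, iterateFrobenius_def, ← hqpv]
  have hmap_fix : ∀ T : Finset (ZMod n), Finset.image (fun z => (q : ZMod n) * z) T = T →
      (∏ z ∈ T, (X - C (ee z))).map phi = ∏ z ∈ T, (X - C (ee z)) := by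
    intro T hT
    rw [Polynomial.map_prod]
    have hstep : ∀ z ∈ T, (X - C (ee z)).map phi = X - C (ee ((q : ZMod n) * z)) := by
      intro z _
      rw [Polynomial.map_sub, Polynomial.map_X, Polynomial.map_C]
      congr 1
      rw [hphi, hee_pow z q, mul_comm]
    rw [Finset.prod_congr rfl hstep]
    conv_rhs => rw [← hT]
    rw [Finset.prod_image (fun a _ b _ h => mul_left_cancel₀ hq0 h)]
  have hlift : ∀ T : Finset (ZMod n), Finset.image (fun z => (q : ZMod n) * z) T = T →
      ∃ g : F[X], g.map (algebraMap F E) = ∏ z ∈ T, (X - C (ee z)) ∧ g.Monic ∧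
        g.natDegree = T.card := by
    intro T hT
    have hmem : (∏ z ∈ T, (X - C (ee z))) ∈ Polynomial.lifts (algebraMap F E) := by
      rw [Polynomial.lifts_iff_coeff_lifts]
      intro k
      apply Stmt10Aux.fixed_mem_range hF
      have := congrArg (fun P => P.coeff k) (hmap_fix T hT)
      simpa [Polynomial.coeff_map, hphi] using this
    obtain ⟨g, hg1, hg2, hg3⟩ := Polynomial.lifts_and_degree_eq_and_monic hmem (hmonicT T)
    refine ⟨g, hg1, hg3, ?_⟩
    rw [← hdegT T, ← hg1, Polynomial.Monic.natDegree_map hg3]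
  obtain ⟨g0, hg0map, hg0monic, hg0deg⟩ := hlift Z himg
  obtain ⟨g1, hg1map, hg1monic, hg1deg⟩ := hlift ZF1 himg1
  obtain ⟨g2, hg2map, hg2monic, hg2deg⟩ := hlift ZF2 himg2
  rw [← hgE] at hg0map
  rw [← hg1E] at hg1map
  rw [← hg2E] at hg2map
  rw [hcardZ] at hg0deg
  rw [hcard1] at hg1deg
  rw [hcard2] at hg2deg
  have hg0split : g0 = g1 * g2 := by
    apply Polynomial.map_injective _ (algebraMap F E).injective
    rw [Polynomial.map_mul, hg0map, hg1map, hg2map]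
    exact hgE_split
  -- the coefficient-vector linear map
  set toVec : F[X] →ₗ[F] (Fin n → F) :=
    { toFun := fun P i => P.coeff (i : ℕ)
      map_add' := fun P Q => by funext i; simp
      map_smul' := fun c P => by funext i; simp } with htoVec
  have htoVec_apply : ∀ (P : F[X]) (i : Fin n), toVec P i = P.coeff (i : ℕ) := fun P i => rfl
  set CC : Submodule F (Fin n → F) :=
    Submodule.map (toVec ∘ₗ LinearMap.mulLeft F g0) (Polynomial.degreeLT F (n - 2 * m)) with hCC
  set CC' : Submodule F (Fin n → F) :=
    Submodule.map (toVec ∘ₗ LinearMap.mulLeft F g1) (Polynomial.degreeLT F (n - m)) with hCC'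
  have hmemgen : ∀ (gg : F[X]) (k : ℕ) (x : Fin n → F),
      x ∈ Submodule.map (toVec ∘ₗ LinearMap.mulLeft F gg) (Polynomial.degreeLT F k) ↔
      ∃ f : F[X], f.degree < (k : WithBot ℕ) ∧ toVec (gg * f) = x := by
    intro gg k x
    rw [Submodule.mem_map]
    constructor
    · rintro ⟨f, hf, rfl⟩
      exact ⟨f, Polynomial.mem_degreeLT.mp hf, rfl⟩
    · rintro ⟨f, hf, h⟩
      exact ⟨f, Polynomial.mem_degreeLT.mpr hf, h⟩
  -- degree arithmetic
  have hdegmul : ∀ (g f : F[X]) (d k : ℕ), g.natDegree = d → g ≠ 0 →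
      f.degree < (k : WithBot ℕ) → (g * f).degree < ((d + k : ℕ) : WithBot ℕ) := by
    intro g f d k hd hg hf
    rcases eq_or_ne f 0 with rfl | hf0
    · rw [mul_zero, Polynomial.degree_zero]
      exact_mod_cast WithBot.bot_lt_coe _
    · rw [Polynomial.degree_mul]
      have h1 : g.degree = (d : WithBot ℕ) := by
        rw [Polynomial.degree_eq_natDegree hg, hd]
      rw [h1]
      calc (d : WithBot ℕ) + f.degree < (d : WithBot ℕ) + (k : WithBot ℕ) :=
            WithBot.add_lt_add_left (by exact_mod_cast WithBot.coe_ne_bot) hf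
        _ = ((d + k : ℕ) : WithBot ℕ) := by push_cast; ring
  have htoVec_inj : ∀ P : F[X], P.degree < (n : WithBot ℕ) → toVec P = 0 → P = 0 := by
    intro P hP h0
    apply Polynomial.ext
    intro k
    by_cases hk : k < n
    · have := congrFun h0 ⟨k, hk⟩
      simpa [htoVec_apply] using this
    · rw [Polynomial.coeff_eq_zero_of_degree_lt (lt_of_lt_of_le hP (by exact_mod_cast Nat.le_of_not_lt hk)), Polynomial.coeff_zero]
  -- dimension computation
  have hrank : ∀ (gg : F[X]) (dd : ℕ), gg.natDegree = dd → gg.Monic → dd ≤ n →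
      Module.finrank F
        (Submodule.map (toVec ∘ₗ LinearMap.mulLeft F gg) (Polynomial.degreeLT F (n - dd)))
        = n - dd := by
    intro gg dd hdd hmon hdn
    set L' : Polynomial.degreeLT F (n - dd) →ₗ[F] (Fin n → F) :=
      (toVec ∘ₗ LinearMap.mulLeft F gg) ∘ₗ (Polynomial.degreeLT F (n - dd)).subtype with hL'
    have heq : Submodule.map (toVec ∘ₗ LinearMap.mulLeft F gg) (Polynomial.degreeLT F (n - dd))
        = LinearMap.range L' := by
      rw [hL', LinearMap.range_comp, Submodule.range_subtype]
    rw [heq]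
    have hinj : Function.Injective L' := by
      rw [← LinearMap.ker_eq_bot]
      rw [Submodule.eq_bot_iff]
      rintro ⟨f, hfmem⟩ hf
      have hfv : toVec (gg * f) = 0 := hf
      have hd : (gg * f).degree < (n : WithBot ℕ) := by
        have := hdegmul gg f dd (n - dd) hdd hmon.ne_zero (Polynomial.mem_degreeLT.mp hfmem)
        rwa [show dd + (n - dd) = n from by omega] at this
      have h1 : gg * f = 0 := htoVec_inj _ hd hfv
      have h2 : f = 0 := by
        rcases mul_eq_zero.mp h1 with h | h
        · exact absurd h hmon.ne_zero
        · exact h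
      exact Subtype.ext h2
    rw [LinearMap.finrank_range_of_inj hinj]
    rw [(Polynomial.degreeLTEquiv F (n - dd)).finrank_eq]
    exact Module.finrank_fin_fun F
  have hrankCC : Module.finrank F CC = n - 2 * m := hrank g0 (2 * m) hg0deg hg0monic h2mn
  have hrankCC' : Module.finrank F CC' = n - m := hrank g1 m hg1deg hg1monic (by omega)
  -- C ⊆ C'
  have hsub : CC ≤ CC' := by
    intro x hx
    obtain ⟨f, hfdeg, hfx⟩ := (hmemgen g0 (n - 2 * m) x).mp hx
    apply (hmemgen g1 (n - m) x).mpr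
    refine ⟨g2 * f, ?_, ?_⟩
    · have := hdegmul g2 f m (n - 2 * m) hg2deg hg2monic.ne_zero hfdeg
      rwa [show m + (n - 2 * m) = n - m from by omega] at this
    · rw [← hfx, ← mul_assoc, ← hg0split]
  -- evaluation facts
  have heval_prod : ∀ (T : Finset (ZMod n)), ∀ w ∈ T, (∏ z ∈ T, (X - C (ee z))).eval (ee w) = 0 := by
    intro T w hw
    rw [Polynomial.eval_prod]
    exact Finset.prod_eq_zero hw (by simp)
  set sv : ℕ := ((s : ZMod n)).val with hsv
  have hevalZ : ∀ w ∈ Z, gE.eval (ee w) = 0 := by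
    rw [hgE]; exact heval_prod Z
  have hevalZ1 : ∀ w ∈ ZF1, g1E.eval (ee w) = 0 := by
    rw [hg1E]; exact heval_prod ZF1
  have hpt : ∀ r : ℕ, α ^ (sv + r) = ee (s' + (r : ZMod n)) := by
    intro r
    show α ^ (sv + r) = α ^ (s' + (r : ZMod n)).val
    apply hcast
    rw [heeval, Nat.cast_add, hsv, heeval]
  have hsZ1 : s' ∈ ZF1 := by
    rw [← Finset.mem_coe, hZF1coe]
    exact ⟨0, by rw [pow_zero, mul_one]⟩
  have hs1Z1 : s' + 1 ∈ ZF1 := by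
    rw [← Finset.mem_coe, hZF1coe]
    exact hcons
  have hs2Z2 : s' + 2 ∈ ZF2 := by
    rw [← Finset.mem_coe, hZF2coe]
    exact ⟨0, by rw [pow_zero, mul_one, hs2cast]⟩
  have hsZ : s' ∈ Z := Finset.mem_union_left _ hsZ1
  have hs1Z : s' + 1 ∈ Z := Finset.mem_union_left _ hs1Z1
  have hs2Z : s' + 2 ∈ Z := Finset.mem_union_right _ hs2Z2
  -- weight bound
  have hwt : ∀ (gg : F[X]) (dd w : ℕ), gg.natDegree = dd → gg ≠ 0 → dd ≤ n →
      (∀ r, r < w → (gg.map (algebraMap F E)).eval (α ^ (sv + r)) = 0) →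
      ∀ f : F[X], f.degree < ((n - dd : ℕ) : WithBot ℕ) → toVec (gg * f) ≠ 0 →
      w < hammingNorm (toVec (gg * f)) := by
    intro gg dd w hdd hgg0 hdn hroots f hfdeg hx0
    by_contra hcon
    push_neg at hcon
    set P : F[X] := gg * f with hPdef
    have hPdeg : P.degree < (n : WithBot ℕ) := by
      have := hdegmul gg f dd (n - dd) hdd hgg0 hfdeg
      rwa [show dd + (n - dd) = n from by omega] at this
    have hPne : P ≠ 0 := by
      intro h
      apply hx0
      show toVec P = 0
      rw [h, map_zero]
    set PE : E[X] := P.map (algebraMap F E) with hPE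
    have hPEne : PE ≠ 0 := by
      rw [hPE, Ne, Polynomial.map_eq_zero_iff (algebraMap F E).injective]
      exact hPne
    have hsupdeg : ∀ i ∈ PE.support, i < n := by
      intro i hi
      have h1 : (i : WithBot ℕ) ≤ PE.degree :=
        Polynomial.le_degree_of_ne_zero (Polynomial.mem_support_iff.mp hi)
      have h2 : PE.degree = P.degree :=
        Polynomial.degree_map_eq_of_injective (algebraMap F E).injective P
      rw [h2] at h1
      exact_mod_cast lt_of_le_of_lt h1 hPdeg
    have hsupcard : PE.support.card ≤ w := by
      refine le_trans (Finset.card_le_card_of_injOn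
        (fun i => (⟨i % n, Nat.mod_lt _ hn0⟩ : Fin n)) ?_ ?_) hcon
      · intro i hi
        have hin : i < n := hsupdeg i hi
        simp only [hammingNorm, Finset.mem_coe, Finset.mem_filter, Finset.mem_univ, true_and]
        show toVec P ⟨i % n, _⟩ ≠ 0
        rw [htoVec_apply]
        show P.coeff (i % n) ≠ 0
        rw [Nat.mod_eq_of_lt hin]
        intro h
        apply Polynomial.mem_support_iff.mp hi
        rw [hPE, Polynomial.coeff_map, h, map_zero]
      · intro i hi j hj hij
        have h1 : i % n = j % n := congrArg Fin.val hij
        rw [Nat.mod_eq_of_lt (hsupdeg i hi), Nat.mod_eq_of_lt (hsupdeg j hj)] at h1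
        exact h1
    have hPEroots : ∀ r, r < w → PE.eval (α ^ (sv + r)) = 0 := by
      intro r hr
      rw [hPE, hPdef, Polynomial.map_mul, Polynomial.eval_mul, hroots r hr, zero_mul]
    have := Stmt10Aux.small_support_eq_zero hord hn0 hsupdeg hsupcard hPEroots
    exact hPEne this
  -- weight bound for CC
  have hwtCC : ∀ x ∈ CC, x ≠ 0 → 4 ≤ hammingNorm x := by
    intro x hx hx0
    obtain ⟨f, hfdeg, hfx⟩ := (hmemgen g0 (n - 2 * m) x).mp hx
    have hroots : ∀ r, r < 3 → (g0.map (algebraMap F E)).eval (α ^ (sv + r)) = 0 := by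
      intro r hr
      rw [hg0map, hpt r]
      apply hevalZ _
      interval_cases r
      · simpa using hsZ
      · simpa using hs1Z
      · have h2 : ((2 : ℕ) : ZMod n) = (2 : ZMod n) := by norm_cast
        rw [h2]
        exact hs2Z
    have := hwt g0 (2 * m) 3 hg0deg hg0monic.ne_zero h2mn hroots f hfdeg (by rw [hfx]; exact hx0)
    rw [hfx] at this
    omega
  -- weight bound for CC'
  have hwtCC' : ∀ x ∈ CC', x ≠ 0 → 3 ≤ hammingNorm x := by
    intro x hx hx0
    obtain ⟨f, hfdeg, hfx⟩ := (hmemgen g1 (n - m) x).mp hx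
    have hroots : ∀ r, r < 2 → (g1.map (algebraMap F E)).eval (α ^ (sv + r)) = 0 := by
      intro r hr
      rw [hg1map, hpt r]
      apply hevalZ1 _
      interval_cases r
      · simpa using hsZ1
      · simpa using hs1Z1
    have := hwt g1 m 2 hg1deg hg1monic.ne_zero (by omega) hroots f hfdeg (by rw [hfx]; exact hx0)
    rw [hfx] at this
    omega
  -- dual containment
  have hdual : ∀ y : Fin n → F, (∀ x ∈ CC, ∑ i, x i * y i = 0) → y ∈ CC := by
    intro y hy
    by_cases hy0 : y = 0
    · rw [hy0]; exact CC.zero_mem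
    set Py : F[X] := ∑ i : Fin n, Polynomial.monomial (i : ℕ) (y i) with hPy
    have hPyc : ∀ j : Fin n, Py.coeff (j : ℕ) = y j := fun j => Stmt10Aux.coeff_sum_monomial y j
    have hdegsum : ∀ (R : Type) (_ : Field R) (c : Fin n → R),
        (∑ i : Fin n, Polynomial.monomial (i : ℕ) (c i)).degree < (n : WithBot ℕ) := by
      intro R _ c
      apply lt_of_le_of_lt (Polynomial.degree_sum_le _ _)
      rw [Finset.sup_lt_iff (by exact_mod_cast WithBot.bot_lt_coe n)]
      intro i _
      exact lt_of_le_of_lt (Polynomial.degree_monomial_le _ _) (by exact_mod_cast i.2)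
    have hPydeg : Py.degree < (n : WithBot ℕ) := hdegsum F _ y
    have hPyne : Py ≠ 0 := by
      intro h
      apply hy0
      funext j
      rw [← hPyc j, h, Polynomial.coeff_zero]
      rfl
    set PyE : E[X] := Py.map (algebraMap F E) with hPyE
    have hPyEne : PyE ≠ 0 := by
      rw [hPyE, Ne, Polynomial.map_eq_zero_iff (algebraMap F E).injective]
      exact hPyne
    -- the key evaluation: PyE vanishes on all of Z
    have hkey : ∀ z ∈ Z, PyE.eval (ee z) = 0 := by
      intro z hz
      set Q : E[X] := ∑ i : Fin n, Polynomial.monomial (i : ℕ) (ee (z * (i : ZMod n))) with hQ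
      have hQc : ∀ j : Fin n, Q.coeff (j : ℕ) = ee (z * (j : ZMod n)) :=
        fun j => Stmt10Aux.coeff_sum_monomial _ j
      have hQdeg : Q.degree < (n : WithBot ℕ) := hdegsum E _ _
      have hQne : Q ≠ 0 := by
        intro h
        have h1 := hQc ⟨0, hn0⟩
        rw [h] at h1
        simp only [Polynomial.coeff_zero] at h1
        have h2 : ee (z * ((⟨0, hn0⟩ : Fin n) : ZMod n)) = 1 := by
          have : ((⟨0, hn0⟩ : Fin n) : ℕ) = 0 := rfl
          rw [show (((⟨0, hn0⟩ : Fin n) : ℕ) : ZMod n) = 0 from by rw [this]; simp]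
          rw [mul_zero]
          show α ^ (0 : ZMod n).val = 1
          rw [ZMod.val_zero, pow_zero]
        rw [← h1] at h2
        exact zero_ne_one h2
      have hQroots : ∀ z' ∈ Z, Q.eval (ee z') = 0 := by
        intro z' hz'
        rw [hQ, Polynomial.eval_finset_sum]
        have hstep : ∀ i : Fin n,
            (Polynomial.monomial (i : ℕ) (ee (z * (i : ZMod n)))).eval (ee z')
            = ee (z + z') ^ (i : ℕ) := by
          intro i
          rw [Polynomial.eval_monomial, hee_pow z' (i : ℕ), ← hee_add, hee_pow]
          congr 1
          ring
        rw [Finset.sum_congr rfl (fun i _ => hstep i)]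
        rw [Fin.sum_univ_eq_sum_range (fun i => ee (z + z') ^ i) n]
        have hne1 : ee (z + z') ≠ 1 := by
          intro h1
          apply hZsumF z hz z' hz'
          have h2 : n ∣ (z + z').val := (hord _).mp h1
          have h3 : (z + z').val < n := ZMod.val_lt _
          have h4 : (z + z').val = 0 := by
            rcases Nat.eq_zero_or_pos ((z + z').val) with h | h
            · exact h
            · have := Nat.le_of_dvd h h2; omega
          exact (ZMod.val_eq_zero _).mp h4
        rw [geom_sum_eq hne1 n, hee_pow_n, sub_self, zero_div]
      obtain ⟨h, hQfact⟩ := Stmt10Aux.prod_X_sub_C_dvd_of_roots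
        (Set.injOn_of_injective hee_inj) hQne hQroots
      have hh0 : h ≠ 0 := by
        intro h0
        apply hQne
        rw [hQfact, h0, mul_zero]
      have hQnatdeg : Q.natDegree < n := by
        have := Polynomial.degree_eq_natDegree hQne ▸ hQdeg
        exact_mod_cast this
      have hndQ : Q.natDegree = 2 * m + h.natDegree := by
        rw [hQfact, Polynomial.natDegree_mul (hmonicT Z).ne_zero hh0, hdegT Z, hcardZ]
      have hhN : h.natDegree < n - 2 * m := by omega
      -- expand `ee (z * i)` via coefficients of gE * h
      have hsplit : ∀ i : Fin n, ee (z * (i : ZMod n))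
          = ∑ j ∈ Finset.range (n - 2 * m), h.coeff j * ((gE * X ^ j).coeff (i : ℕ)) := by
        intro i
        rw [← hQc i, hQfact]
        conv_lhs => rw [Polynomial.as_sum_range' h (n - 2 * m) hhN]
        rw [Finset.mul_sum, Polynomial.finset_sum_coeff]
        apply Finset.sum_congr rfl
        intro j _
        rw [show (Polynomial.monomial j (h.coeff j) : E[X]) = C (h.coeff j) * X ^ j from
          (Polynomial.C_mul_X_pow_eq_monomial).symm]
        rw [show (∏ z ∈ Z, (X - C (ee z))) * (C (h.coeff j) * X ^ j)
          = C (h.coeff j) * (gE * X ^ j) from by rw [← hgE]; ring]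
        rw [Polynomial.coeff_C_mul]
      have hPyE_eval : PyE.eval (ee z)
          = ∑ i : Fin n, (algebraMap F E) (y i) * ee (z * (i : ZMod n)) := by
        rw [hPyE, Polynomial.eval_map, hPy, Polynomial.eval₂_finset_sum]
        apply Finset.sum_congr rfl
        intro i _
        rw [Polynomial.eval₂_monomial, hee_pow]
      rw [hPyE_eval]
      have hswap : ∀ i : Fin n, (algebraMap F E) (y i) * ee (z * (i : ZMod n))
          = ∑ j ∈ Finset.range (n - 2 * m),
              h.coeff j * ((algebraMap F E) (y i) * ((gE * X ^ j).coeff (i : ℕ))) := by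
        intro i
        rw [hsplit i, Finset.mul_sum]
        apply Finset.sum_congr rfl
        intro j _
        ring
      rw [Finset.sum_congr rfl (fun i _ => hswap i), Finset.sum_comm]
      apply Finset.sum_eq_zero
      intro j hj
      rw [← Finset.mul_sum]
      have hxj : toVec (g0 * X ^ j) ∈ CC := by
        apply (hmemgen g0 (n - 2 * m) _).mpr
        refine ⟨X ^ j, ?_, rfl⟩
        rw [Polynomial.degree_X_pow]
        exact_mod_cast Finset.mem_range.mp hj
      have hzero := hy _ hxj
      have hcoeffmap : ∀ i : Fin n, (gE * X ^ j).coeff (i : ℕ)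
          = algebraMap F E ((g0 * X ^ j).coeff (i : ℕ)) := by
        intro i
        have hmm : gE * X ^ j = Polynomial.map (algebraMap F E) (g0 * X ^ j) := by
          rw [Polynomial.map_mul, hg0map, Polynomial.map_pow, Polynomial.map_X]
        rw [hmm, Polynomial.coeff_map]
      have hinner : ∑ i : Fin n, (algebraMap F E) (y i) * ((gE * X ^ j).coeff (i : ℕ))
          = algebraMap F E (∑ i : Fin n, y i * (g0 * X ^ j).coeff (i : ℕ)) := by
        rw [map_sum]
        apply Finset.sum_congr rfl
        intro i _
        rw [hcoeffmap i, ← map_mul]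
      rw [hinner]
      have hz0 : (∑ i : Fin n, y i * (g0 * X ^ j).coeff (i : ℕ)) = 0 := by
        rw [← hzero]
        apply Finset.sum_congr rfl
        intro i _
        rw [htoVec_apply, mul_comm]
      rw [hz0, map_zero, mul_zero]
    -- conclude: g0 divides Py
    have hdvdE : gE ∣ PyE := by
      rw [hgE]
      exact Stmt10Aux.prod_X_sub_C_dvd_of_roots (Set.injOn_of_injective hee_inj) hPyEne hkey
    have hdvd : g0 ∣ Py := by
      rw [← Polynomial.map_dvd_map' (algebraMap F E), hg0map]
      exact hdvdE
    obtain ⟨f, hf⟩ := hdvd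
    have hfne : f ≠ 0 := by
      intro h0
      apply hPyne
      rw [hf, h0, mul_zero]
    have hPynatdeg : Py.natDegree < n := by
      have := Polynomial.degree_eq_natDegree hPyne ▸ hPydeg
      exact_mod_cast this
    have hndPy : Py.natDegree = 2 * m + f.natDegree := by
      rw [hf, Polynomial.natDegree_mul hg0monic.ne_zero hfne, hg0deg]
    apply (hmemgen g0 (n - 2 * m) y).mpr
    refine ⟨f, ?_, ?_⟩
    · rw [Polynomial.degree_eq_natDegree hfne]
      exact_mod_cast by omega
    · rw [← hf]
      funext j
      rw [htoVec_apply, hPyc j]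
  exact ⟨CC, CC', hsub, hdual, hrankCC, hwtCC, hrankCC', hwtCC'⟩
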